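/- Let O = F_q[[t]] with q a power of 2, and let O_i = O/(t^i). Let τ ∈ O_i with valuation w ≥ 1 (set w = i if τ = 0) and define U(τ) = {x ∈ O_i : x(x+τ) = 0}, a subgroup of (O_i, +). Then U(τ) = t^{i−w}O_i ∪ (τ + t^{i−w}O_i) if w < ⌈i/2⌉, and U(τ) = t^{⌈i/2⌉}O_i if w ≥ ⌈i/2⌉. In particular |U(τ)| = 2q^w if w < ⌈i/2⌉ and |U(τ)| = q^{⌊i/2⌋} if w ≥ ⌈i/2⌉. -/

import Mathlib

/-- The finite chain ring `O_i = F_q[[t]]/(t^i)`. -/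
abbrev TruncatedPowerSeries (F : Type*) [Field F] (i : ℕ) : Type _ :=
  PowerSeries F ⧸ Ideal.span {(PowerSeries.X : PowerSeries F) ^ i}

/-- The image of `t` in `O_i = F_q[[t]]/(t^i)`. -/
noncomputable def tquot (F : Type*) [Field F] (i : ℕ) : TruncatedPowerSeries F i :=
  Ideal.Quotient.mk _ (PowerSeries.X : PowerSeries F)



open PowerSeries

namespace TPS

variable {F : Type*} [Field F] (i : ℕ)

noncomputable def mk : PowerSeries F →+* TruncatedPowerSeries F i :=
  Ideal.Quotient.mk _

lemma mk_surjective : Function.Surjective (mk (F := F) i) :=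
  Ideal.Quotient.mk_surjective

lemma mk_eq_mk {f g : PowerSeries F} :
    mk i f = mk i g ↔ (X : PowerSeries F) ^ i ∣ f - g := by
  rw [mk, Ideal.Quotient.mk_eq_mk_iff_sub_mem, Ideal.mem_span_singleton]

lemma mk_eq_zero {f : PowerSeries F} :
    mk i f = 0 ↔ (X : PowerSeries F) ^ i ∣ f := by
  rw [show (0 : TruncatedPowerSeries F i) = mk i 0 from (map_zero _).symm, mk_eq_mk,
    sub_zero]

lemma tquot_pow (j : ℕ) : tquot F i ^ j = mk i (X ^ j) := by
  simp [tquot, mk]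

lemma mem_span_iff {j : ℕ} (hj : j ≤ i) (f : PowerSeries F) :
    mk i f ∈ Ideal.span {tquot F i ^ j} ↔ (X : PowerSeries F) ^ j ∣ f := by
  rw [tquot_pow]
  constructor
  · intro h
    rw [Ideal.mem_span_singleton'] at h
    obtain ⟨r, hr⟩ := h
    obtain ⟨g, rfl⟩ := mk_surjective i r
    rw [← map_mul, mk_eq_mk] at hr
    obtain ⟨h, hh⟩ := (dvd_sub_comm.mp hr)
    have : f = g * X ^ j + X ^ i * h := by linear_combination hh
    rw [this]
    exact dvd_add (Dvd.intro_left g rfl) (Dvd.dvd.mul_right (pow_dvd_pow _ hj) h)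
  · rintro ⟨g, rfl⟩
    exact Ideal.mem_span_singleton'.mpr ⟨mk i g, by rw [← map_mul, mul_comm]⟩

lemma span_mono {j j' : ℕ} (h : j ≤ j') :
    Ideal.span {tquot F i ^ j'} ≤ Ideal.span {tquot F i ^ j} :=
  Ideal.span_singleton_le_span_singleton.mpr (pow_dvd_pow _ h)

lemma order_eq_of {a : ℕ} {f : PowerSeries F} (h1 : (X : PowerSeries F) ^ a ∣ f)
    (h2 : ¬ (X : PowerSeries F) ^ (a + 1) ∣ f) : f.order = a := by
  rw [X_pow_dvd_iff] at h1 h2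
  push_neg at h2
  obtain ⟨m, hm, hm'⟩ := h2
  have : m = a := le_antisymm (Nat.lt_succ_iff.mp hm) (by
    by_contra h
    exact hm' (h1 m (lt_of_not_ge h)))
  subst this
  exact order_eq_nat.mpr ⟨hm', h1⟩

lemma exact_mul_ne {a b : ℕ} (hab : a + b < i) {x y : TruncatedPowerSeries F i}
    (hx : x ∈ Ideal.span {tquot F i ^ a}) (hx' : x ∉ Ideal.span {tquot F i ^ (a + 1)})
    (hy : y ∈ Ideal.span {tquot F i ^ b}) (hy' : y ∉ Ideal.span {tquot F i ^ (b + 1)}) :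
    x * y ∉ Ideal.span {tquot F i ^ (a + b + 1)} := by
  obtain ⟨f, rfl⟩ := mk_surjective i x
  obtain ⟨g, rfl⟩ := mk_surjective i y
  rw [mem_span_iff i (by omega)] at hx hy
  rw [mem_span_iff i (by omega)] at hx' hy'
  rw [← map_mul, mem_span_iff i (by omega)]
  intro hdvd
  rw [X_pow_dvd_iff] at hdvd
  have hord : (f * g).order = ((a + b : ℕ) : ℕ∞) := by
    rw [order_mul, order_eq_of hx hx', order_eq_of hy hy']
    exact_mod_cast rfl
  exact (order_eq_nat.mp hord).1 (hdvd (a + b) (by omega))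

lemma mul_span_zero {a b : ℕ} (ha : a ≤ i) (hb : b ≤ i) (hab : i ≤ a + b)
    {x y : TruncatedPowerSeries F i}
    (hx : x ∈ Ideal.span {tquot F i ^ a}) (hy : y ∈ Ideal.span {tquot F i ^ b}) :
    x * y = 0 := by
  obtain ⟨f, rfl⟩ := mk_surjective i x
  obtain ⟨g, rfl⟩ := mk_surjective i y
  rw [mem_span_iff i ha] at hx
  rw [mem_span_iff i hb] at hy
  rw [← map_mul, mk_eq_zero]
  exact dvd_trans (pow_dvd_pow _ hab) (by rw [pow_add]; exact mul_dvd_mul hx hy)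

lemma exists_exact {x : TruncatedPowerSeries F i} {n : ℕ}
    (h : x ∉ Ideal.span {tquot F i ^ n}) :
    ∃ a < n, x ∈ Ideal.span {tquot F i ^ a} ∧ x ∉ Ideal.span {tquot F i ^ (a + 1)} := by
  have h0 : x ∈ Ideal.span {tquot F i ^ 0} := by
    simp [Ideal.span_singleton_one]
  have hex : ∃ k, x ∉ Ideal.span {tquot F i ^ k} := ⟨n, h⟩
  classical
  set k := Nat.find hex with hk
  have hk1 : 1 ≤ k := by
    rcases Nat.eq_zero_or_pos k with h' | h'
    · exact absurd h0 (h' ▸ Nat.find_spec hex)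
    · exact h'
  refine ⟨k - 1, ?_, ?_, ?_⟩
  · have : k ≤ n := Nat.find_le h
    omega
  · have := Nat.find_min hex (m := k - 1) (by omega)
    simpa using this
  · have : k - 1 + 1 = k := by omega
    rw [this]
    exact Nat.find_spec hex

lemma zero_of_mul {a : ℕ} (ha : a < i) {x y : TruncatedPowerSeries F i}
    (hx : x ∈ Ideal.span {tquot F i ^ a}) (hx' : x ∉ Ideal.span {tquot F i ^ (a + 1)})
    (hxy : x * y = 0) : y ∈ Ideal.span {tquot F i ^ (i - a)} := by
  by_contra h
  obtain ⟨b, hb, hy, hy'⟩ := exists_exact i h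
  have := exact_mul_ne i (a := a) (b := b) (by omega) hx hx' hy hy'
  rw [hxy] at this
  exact this (Ideal.zero_mem _)

lemma add_self [CharP F 2] (x : TruncatedPowerSeries F i) : x + x = 0 := by
  have hF : (2 : F) = 0 := by
    have := CharP.cast_eq_zero F 2
    simpa using this
  obtain ⟨f, rfl⟩ := mk_surjective i x
  rw [← map_add, ← two_mul]
  have h2 : (2 : PowerSeries F) = 0 := by
    have : (2 : PowerSeries F) = PowerSeries.C (2 : F) := (map_ofNat _ 2).symm
    rw [this, hF, map_zero]
  rw [h2, zero_mul, map_zero]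

end TPS

namespace TPS
variable {F : Type*} [Field F] (i : ℕ)

noncomputable def efun (n : ℕ) (c : Fin n → F) : PowerSeries F :=
  PowerSeries.mk (fun m => if h : m < n then c ⟨m, h⟩ else 0)

lemma card_span [Fintype F] {j : ℕ} (hj : j ≤ i) :
    Nat.card (Ideal.span {tquot F i ^ j} : Set (TruncatedPowerSeries F i)) =
      Fintype.card F ^ (i - j) := by
  classical
  set n := i - j with hn
  set ψ : (Fin n → F) → (Ideal.span {tquot F i ^ j} : Set (TruncatedPowerSeries F i)) :=
    fun c => ⟨mk i (X ^ j * efun n c),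
      by rw [SetLike.mem_coe, mem_span_iff i hj]; exact dvd_mul_right _ _⟩ with hψ
  have hXj : (X : PowerSeries F) ^ j ≠ 0 := pow_ne_zero _ X_ne_zero
  have hji : (X : PowerSeries F) ^ i = X ^ j * X ^ n := by
    rw [← pow_add]; congr 1; omega
  have hbij : Function.Bijective ψ := by
    constructor
    · intro c c' hcc
      have h1 : mk i (X ^ j * efun n c) = mk i (X ^ j * efun n c') := congrArg Subtype.val hcc
      rw [mk_eq_mk, ← mul_sub, hji, mul_dvd_mul_iff_left hXj, X_pow_dvd_iff] at h1
      funext m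
      have h2 := h1 m m.2
      rw [map_sub, sub_eq_zero] at h2
      simpa [efun, PowerSeries.coeff_mk, m.2] using h2
    · rintro ⟨x, hx⟩
      obtain ⟨f, rfl⟩ := mk_surjective i x
      rw [SetLike.mem_coe, mem_span_iff i hj] at hx
      obtain ⟨g, rfl⟩ := hx
      refine ⟨fun m => coeff m g, Subtype.ext ?_⟩
      show mk i (X ^ j * efun n _) = mk i (X ^ j * g)
      rw [mk_eq_mk, ← mul_sub]
      have : (X : PowerSeries F) ^ n ∣ efun n (fun m => coeff m g) - g := by
        rw [X_pow_dvd_iff]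
        intro m hm
        simp [efun, PowerSeries.coeff_mk, hm]
      exact hji ▸ mul_dvd_mul_left _ this
  rw [← Nat.card_eq_of_bijective ψ hbij, Nat.card_eq_fintype_card, Fintype.card_fun]
  simp

instance finite_ring [Fintype F] : Finite (TruncatedPowerSeries F i) := by
  classical
  apply Finite.of_surjective (fun c : Fin i → F => mk i (efun i c))
  intro x
  obtain ⟨f, rfl⟩ := mk_surjective i x
  refine ⟨fun m => coeff m f, ?_⟩
  rw [mk_eq_mk, X_pow_dvd_iff]
  intro m hm
  simp [efun, PowerSeries.coeff_mk, hm]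

end TPS


set_option maxHeartbeats 2000000 in
open TPS in
/-- Let `O = F_q[[t]]` with `q` a power of `2`, `O_i = O/(t^i)`, and `τ ∈ O_i` of valuation
`w ≥ 1` (with `w = i` when `τ = 0`).  The group `U(τ) = {x ∈ O_i : x(x+τ) = 0}` equals
`t^{i−w}O_i ∪ (τ + t^{i−w}O_i)` if `w < ⌈i/2⌉`, and `t^{⌈i/2⌉}O_i` if `w ≥ ⌈i/2⌉`;
in particular `|U(τ)| = 2q^w` in the first case and `|U(τ)| = q^{⌊i/2⌋}` in the second. -/
theorem U_tau_description (F : Type*) [Field F] [Fintype F] [CharP F 2]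
    (i w : ℕ) (hi : 1 ≤ i) (hw1 : 1 ≤ w) (hwi : w ≤ i)
    (τ : TruncatedPowerSeries F i)
    (hmem : τ ∈ Ideal.span {tquot F i ^ w})
    (hval : w < i → τ ∉ Ideal.span {tquot F i ^ (w + 1)})
    (hzero : τ = 0 → w = i) :
    (w < (i + 1) / 2 →
      ({x : TruncatedPowerSeries F i | x * (x + τ) = 0} =
          (Ideal.span {tquot F i ^ (i - w)} : Set (TruncatedPowerSeries F i)) ∪
            {x | ∃ y ∈ Ideal.span {tquot F i ^ (i - w)}, x = τ + y}) ∧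
        Nat.card {x : TruncatedPowerSeries F i // x * (x + τ) = 0} =
          2 * Fintype.card F ^ w) ∧
    ((i + 1) / 2 ≤ w →
      ({x : TruncatedPowerSeries F i | x * (x + τ) = 0} =
          (Ideal.span {tquot F i ^ ((i + 1) / 2)} : Set (TruncatedPowerSeries F i))) ∧
        Nat.card {x : TruncatedPowerSeries F i // x * (x + τ) = 0} =
          Fintype.card F ^ (i / 2)) := by
  have hτself : τ + τ = 0 := add_self i τ
  constructor
  · intro hw
    have hwlt : w < i := by omega
    have hτexact : τ ∉ Ideal.span {tquot F i ^ (w + 1)} := hval hwlt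
    have hseteq : {x : TruncatedPowerSeries F i | x * (x + τ) = 0} =
        (Ideal.span {tquot F i ^ (i - w)} : Set (TruncatedPowerSeries F i)) ∪
          {x | ∃ y ∈ Ideal.span {tquot F i ^ (i - w)}, x = τ + y} := by
      ext x
      simp only [Set.mem_setOf_eq, Set.mem_union, SetLike.mem_coe]
      constructor
      · intro hx0
        by_cases hxw : x ∈ Ideal.span {tquot F i ^ (w + 1)}
        · left
          by_contra hnot
          obtain ⟨a, ha, hxa, hxa'⟩ := exists_exact i hnot
          have haw : w + 1 ≤ a := by
            by_contra h
            exact hxa' (span_mono i (by omega) hxw)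
          have hy := zero_of_mul i (a := a) (by omega) hxa hxa' hx0
          have h1 : x + τ ∈ Ideal.span {tquot F i ^ (w + 1)} :=
            span_mono i (by omega) hy
          have h2 : τ ∈ Ideal.span {tquot F i ^ (w + 1)} := by
            have hxx : x + x = 0 := add_self i x
            have : τ = x + (x + τ) := by rw [← add_assoc, hxx, zero_add]
            rw [this]
            exact Ideal.add_mem _ hxw h1
          exact hτexact h2
        · obtain ⟨a, ha, hxa, hxa'⟩ := exists_exact i hxw
          have hy := zero_of_mul i (a := a) (by omega) hxa hxa' hx0
          by_cases haw : a = w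
          · right
            refine ⟨x + τ, by rw [← haw]; exact hy, ?_⟩
            rw [add_comm x τ, ← add_assoc, hτself, zero_add]
          · exfalso
            have hτa : τ ∈ Ideal.span {tquot F i ^ (a + 1)} :=
              span_mono i (by omega) hmem
            have hxτa : x + τ ∈ Ideal.span {tquot F i ^ (a + 1)} :=
              span_mono i (by omega) hy
            apply hxa'
            have : x = (x + τ) + τ := by rw [add_assoc, hτself, add_zero]
            rw [this]
            exact Ideal.add_mem _ hxτa hτa
      · rintro (hx | ⟨y, hy, rfl⟩)
        · rw [mul_add]
          have h1 : x * x = 0 :=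
            mul_span_zero i (by omega) (by omega) (by omega) hx hx
          have h2 : x * τ = 0 :=
            mul_span_zero i (by omega) (by omega) (by omega) hx hmem
          rw [h1, h2, add_zero]
        · have hyy : (τ + y) + τ = y := by
            rw [add_comm τ y, add_assoc, hτself, add_zero]
          rw [hyy, add_mul]
          have h1 : τ * y = 0 :=
            mul_span_zero i hwi (by omega) (by omega) hmem hy
          have h2 : y * y = 0 :=
            mul_span_zero i (by omega) (by omega) (by omega) hy hy
          rw [h1, h2, add_zero]
    refine ⟨hseteq, ?_⟩
    have hA := card_span (F := F) i (j := i - w) (by omega)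
    have hiww : i - (i - w) = w := by omega
    rw [hiww] at hA
    set A : Set (TruncatedPowerSeries F i) :=
      (Ideal.span {tquot F i ^ (i - w)} : Set (TruncatedPowerSeries F i)) with hAdef
    have hB : {x : TruncatedPowerSeries F i | ∃ y ∈ Ideal.span {tquot F i ^ (i - w)}, x = τ + y}
        = (fun y => τ + y) '' A := by
      ext x
      simp only [Set.mem_setOf_eq, Set.mem_image, hAdef, SetLike.mem_coe]
      constructor
      · rintro ⟨y, hy, rfl⟩; exact ⟨y, hy, rfl⟩
      · rintro ⟨y, hy, rfl⟩; exact ⟨y, hy, rfl⟩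
    have hdisj : Disjoint A ((fun y => τ + y) '' A) := by
      rw [Set.disjoint_left]
      rintro x hxA ⟨y, hyA, rfl⟩
      apply hτexact
      have hτxy : τ = (τ + y) + y := by rw [add_assoc, add_self i y, add_zero]
      rw [hτxy]
      exact span_mono i (by omega) (Ideal.add_mem _ hxA hyA)
    have hinj : Function.Injective (fun y : TruncatedPowerSeries F i => τ + y) :=
      fun y1 y2 h => by simpa using add_left_cancel h
    have hcard : Nat.card {x : TruncatedPowerSeries F i // x * (x + τ) = 0}
        = Nat.card ↥(A ∪ (fun y => τ + y) '' A) := by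
      apply Nat.card_congr
      apply Equiv.setCongr
      rw [← hB]
      exact hseteq
    rw [hcard, Nat.card_coe_set_eq,
      Set.ncard_union_eq hdisj (Set.toFinite _) (Set.toFinite _),
      Set.ncard_image_of_injective _ hinj, ← Nat.card_coe_set_eq, hA]
    ring
  · intro hw
    set c := (i + 1) / 2 with hc
    have hci : c ≤ i := by omega
    have hseteq : {x : TruncatedPowerSeries F i | x * (x + τ) = 0} =
        (Ideal.span {tquot F i ^ c} : Set (TruncatedPowerSeries F i)) := by
      ext x
      simp only [Set.mem_setOf_eq, SetLike.mem_coe]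
      constructor
      · intro hx0
        by_contra hnot
        obtain ⟨a, ha, hxa, hxa'⟩ := exists_exact i hnot
        have hy := zero_of_mul i (a := a) (by omega) hxa hxa' hx0
        have hτa : τ ∈ Ideal.span {tquot F i ^ (a + 1)} :=
          span_mono i (by omega) hmem
        have hxτa : x + τ ∈ Ideal.span {tquot F i ^ (a + 1)} :=
          span_mono i (by omega) hy
        apply hxa'
        have : x = (x + τ) + τ := by rw [add_assoc, hτself, add_zero]
        rw [this]
        exact Ideal.add_mem _ hxτa hτa
      · intro hx
        rw [mul_add]
        have h1 : x * x = 0 := mul_span_zero i hci hci (by omega) hx hx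
        have h2 : x * τ = 0 := mul_span_zero i hci hwi (by omega) hx hmem
        rw [h1, h2, add_zero]
    refine ⟨hseteq, ?_⟩
    have hA := card_span (F := F) i (j := c) hci
    have hic : i - c = i / 2 := by omega
    rw [hic] at hA
    rw [← hA]
    exact Nat.card_congr (Equiv.setCongr hseteq)
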